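/- Trace identity connecting the normalized-cut operator and the kernel contrastive loss (Proposition H.2): Let (e_j)_{j∈J} be a Hilbert basis of E (J countable). Then for every measurable encoder f : X → S^{d−1}, the series Σ_{j∈J} [ ∫∫ ⟨h(f(x)), e_j⟩_E · ⟨h(f(x')), e_j⟩_E · ( w(x,x') − λ·w(x)w(x') ) dν(x)dν(x') ] converges, and its sum equals ∫∫ k(f(x),f(x')) w(x,x') dν(x)dν(x') − λ·∫∫ k(f(x),f(x')) w(x)w(x') dν(x)dν(x'), i.e. it equals −L_KCL(f;λ). (In operator language: −Tr(H†AH) = L_KCL(f;λ), where H : E → L²(X,P_X) is φ ↦ ⟨h(f(·)),φ⟩_E and A is the integral operator with kernel sim(x,x';λ) against the density w.) -/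

import Mathlib

open MeasureTheory
open scoped RealInnerProductSpace ENNReal

noncomputable section

namespace KCLStatement16

variable {X : Type*} [MeasurableSpace X]

/-- The marginal density `w(x) := ∫ w(x,x') dν(x')`. -/
def marg (ν : Measure X) (w : X → X → ℝ) (x : X) : ℝ := ∫ x', w x x' ∂ν

/-- **Trace identity connecting the normalized-cut operator and the kernel contrastive loss
(Proposition H.2).**  Let `(e_j)_{j∈J}` be a Hilbert basis of `E` (`J` countable).  Then for
every measurable encoder `f : X → S^{d−1}`, the series
`Σ_j ∫∫ ⟪h(f x), e_j⟫ ⟪h(f x'), e_j⟫ (w(x,x') − λ w(x)w(x'))` converges, and its sum equals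
`∫∫ k(f x, f x') w(x,x') − λ ∫∫ k(f x, f x') w(x)w(x')`, i.e. it equals `−L_KCL(f;λ)`. -/
theorem trace_identity_normalized_cut_kcl
    {X : Type*} [MeasurableSpace X]
    {E : Type*} [NormedAddCommGroup E] [InnerProductSpace ℝ E] [CompleteSpace E]
    {d : ℕ} (ν : Measure X) [SigmaFinite ν]
    (w : X → X → ℝ)
    (hwmeas : Measurable (Function.uncurry w))
    (hwnn : ∀ x x', 0 ≤ w x x')
    (hwint : Integrable (fun p : X × X => w p.1 p.2) (ν.prod ν))
    (hwone : ∫ p, w p.1 p.2 ∂(ν.prod ν) = 1)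
    (hmint : Integrable (marg ν w) ν)
    (hmpos : ∀ x, 0 < marg ν w x)
    -- the continuous bounded feature map
    (h : EuclideanSpace ℝ (Fin d) → E) (hcont : Continuous h)
    (hbdd : ∃ C, ∀ z, ‖h z‖ ≤ C)
    (lam : ℝ) (hlam : 0 ≤ lam)
    -- a countable Hilbert basis of `E`
    {J : Type*} [Countable J] (e : HilbertBasis J ℝ E)
    -- the encoder
    (f : X → EuclideanSpace ℝ (Fin d)) (hf : Measurable f) (hfs : ∀ x, ‖f x‖ = 1) :
    HasSum
      (fun j : J => ∫ x, ∫ x', (⟪h (f x), e j⟫ : ℝ) * (⟪h (f x'), e j⟫ : ℝ) *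
        (w x x' - lam * (marg ν w x * marg ν w x')) ∂ν ∂ν)
      ((∫ x, ∫ x', (⟪h (f x), h (f x')⟫ : ℝ) * w x x' ∂ν ∂ν)
        - lam * ∫ x, ∫ x', (⟪h (f x), h (f x')⟫ : ℝ) * (marg ν w x * marg ν w x') ∂ν ∂ν) := by
  classical
  set g : X → E := fun x => h (f x) with hg
  have hgmeas : StronglyMeasurable g :=
    hcont.comp_stronglyMeasurable hf.stronglyMeasurable
  obtain ⟨C, hC⟩ := hbdd
  have hC0 : 0 ≤ C := le_trans (norm_nonneg _) (hC 0)
  have hgC : ∀ x, ‖g x‖ ≤ C := fun x => hC (f x)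
  -- coefficients
  set a : J → X → ℝ := fun j x => ⟪g x, e j⟫ with ha
  have hameas : ∀ j, StronglyMeasurable (a j) := fun j =>
    continuous_inner.comp_stronglyMeasurable (hgmeas.prodMk stronglyMeasurable_const)
  have haC : ∀ j x, |a j x| ≤ C := by
    intro j x
    calc |a j x| ≤ ‖g x‖ * ‖e j‖ := abs_real_inner_le_norm _ _
    _ ≤ C := by rw [e.orthonormal.1 j]; simpa using hgC x
  -- Parseval: pointwise expansion of the inner product
  have hParseval : ∀ x y : X, HasSum (fun j => a j x * a j y) ⟪g x, g y⟫ := by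
    intro x y
    have := e.hasSum_inner_mul_inner (g x) (g y)
    simpa [ha, real_inner_comm (g y)] using this
  -- sum of squares
  have hsq : ∀ x, Summable (fun j => a j x * a j x) := fun x => (hParseval x x).summable
  have hsq_sum : ∀ x, ∑' j, a j x * a j x = ‖g x‖ ^ 2 := by
    intro x
    rw [(hParseval x x).tsum_eq, real_inner_self_eq_norm_sq]
  -- the signed density
  set m : X × X → ℝ := fun p => w p.1 p.2 - lam * (marg ν w p.1 * marg ν w p.2) with hm
  have hmargmeas : StronglyMeasurable (marg ν w) :=
    hwmeas.stronglyMeasurable.integral_prod_right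
  have hmargprod_int : Integrable (fun p : X × X => marg ν w p.1 * marg ν w p.2) (ν.prod ν) :=
    hmint.mul_prod hmint
  have hm_int : Integrable m (ν.prod ν) := hwint.sub (hmargprod_int.const_mul lam)
  -- the summands on the product space
  set F : J → X × X → ℝ := fun j p => a j p.1 * a j p.2 * m p with hF
  have hFmeas : ∀ j, StronglyMeasurable (F j) := by
    intro j
    exact (((hameas j).comp_measurable measurable_fst).mul
      ((hameas j).comp_measurable measurable_snd)).mul
      ((hwmeas.stronglyMeasurable.sub
        (((hmargmeas.comp_measurable measurable_fst).mul
          (hmargmeas.comp_measurable measurable_snd)).const_mul lam)))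
  have haabd : ∀ j (p : X × X), ‖a j p.1 * a j p.2‖ ≤ C * C := by
    intro j p
    rw [norm_mul]
    exact mul_le_mul (haC j p.1) (haC j p.2) (abs_nonneg _) hC0
  have hF_int : ∀ j, Integrable (F j) (ν.prod ν) := by
    intro j
    exact hm_int.bdd_mul
      (((hameas j).comp_measurable measurable_fst).mul
        ((hameas j).comp_measurable measurable_snd)).aestronglyMeasurable
      (Filter.Eventually.of_forall fun p => haabd j p)
  -- summability of the integral norms, via a lintegral computation
  have habs_sum : ∀ p : X × X, Summable fun j => |a j p.1 * a j p.2| := by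
    intro p
    apply Summable.of_nonneg_of_le (fun j => abs_nonneg _)
      (fun j => ?_) (((hsq p.1).add (hsq p.2)).div_const 2)
    rw [abs_mul]
    nlinarith [sq_nonneg (|a j p.1| - |a j p.2|),
      abs_mul_abs_self (a j p.1), abs_mul_abs_self (a j p.2)]
  have habs_tsum_le : ∀ p : X × X, ∑' j, |a j p.1 * a j p.2| ≤ C * C := by
    intro p
    have h1 : ∑' j, |a j p.1 * a j p.2| ≤
        ∑' j, (a j p.1 * a j p.1 + a j p.2 * a j p.2) / 2 := by
      apply Summable.tsum_le_tsum _ (habs_sum p) (((hsq p.1).add (hsq p.2)).div_const 2)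
      intro j
      rw [abs_mul]
      nlinarith [sq_nonneg (|a j p.1| - |a j p.2|),
        abs_mul_abs_self (a j p.1), abs_mul_abs_self (a j p.2)]
    have h2 : ∑' j, (a j p.1 * a j p.1 + a j p.2 * a j p.2) / 2
        = (‖g p.1‖ ^ 2 + ‖g p.2‖ ^ 2) / 2 := by
      rw [tsum_div_const, Summable.tsum_add (hsq p.1) (hsq p.2)]
      have e1 := hsq_sum p.1; have e2 := hsq_sum p.2
      rw [e1, e2]
    refine h1.trans ?_
    rw [h2]
    nlinarith [hgC p.1, hgC p.2, norm_nonneg (g p.1), norm_nonneg (g p.2)]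
  have hF_sum : Summable fun j => ∫ p, ‖F j p‖ ∂(ν.prod ν) := by
    set φ : J → ℝ≥0∞ := fun j => ∫⁻ p, ‖F j p‖₊ ∂(ν.prod ν) with hφ
    have hφ_tsum : ∑' j, φ j ≤ ENNReal.ofReal (C * C) * ∫⁻ p, ‖m p‖₊ ∂(ν.prod ν) := by
      rw [hφ, ← lintegral_tsum (fun j => (hFmeas j).measurable.nnnorm.coe_nnreal_ennreal.aemeasurable)]
      rw [← lintegral_const_mul' _ _ ENNReal.ofReal_ne_top]
      apply lintegral_mono
      intro p
      have hsp : ∀ j, (‖F j p‖₊ : ℝ≥0∞) = ENNReal.ofReal |a j p.1 * a j p.2| * ‖m p‖₊ := by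
        intro j
        rw [hF]
        simp only
        rw [← enorm_eq_nnnorm, ← ofReal_norm, ← enorm_eq_nnnorm, ← ofReal_norm,
          norm_mul, ENNReal.ofReal_mul (norm_nonneg _), Real.norm_eq_abs]
      calc ∑' j, (‖F j p‖₊ : ℝ≥0∞)
          = (∑' j, ENNReal.ofReal |a j p.1 * a j p.2|) * ‖m p‖₊ := by
            simp_rw [hsp]; exact ENNReal.tsum_mul_right
        _ ≤ ENNReal.ofReal (C * C) * ‖m p‖₊ := by
            apply mul_le_mul_left
            rw [← ENNReal.ofReal_tsum_of_nonneg (fun j => abs_nonneg _) (habs_sum p)]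
            exact ENNReal.ofReal_le_ofReal (habs_tsum_le p)
    have hφ_fin : ∑' j, φ j ≠ ∞ := by
      refine ne_of_lt (lt_of_le_of_lt hφ_tsum ?_)
      exact ENNReal.mul_lt_top ENNReal.ofReal_lt_top hm_int.2
    have hφ_summable := ENNReal.summable_toReal hφ_fin
    have : ∀ j, ∫ p, ‖F j p‖ ∂(ν.prod ν) = (φ j).toReal := by
      intro j
      rw [hφ]
      exact integral_norm_eq_lintegral_enorm (hFmeas j).aestronglyMeasurable
    simpa only [this] using hφ_summable
  -- the main HasSum on the product space
  have key : HasSum (fun j => ∫ p, F j p ∂(ν.prod ν))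
      (∫ p, ⟪g p.1, g p.2⟫ * m p ∂(ν.prod ν)) := by
    have hs := hasSum_integral_of_summable_integral_norm hF_int hF_sum
    have hpt : ∀ p : X × X, (∑' j, F j p) = ⟪g p.1, g p.2⟫ * m p := fun p =>
      ((hParseval p.1 p.2).mul_right (m p)).tsum_eq
    simpa only [hpt] using hs
  -- rewrite each term as an iterated integral
  have hterm : ∀ j, ∫ p, F j p ∂(ν.prod ν)
      = ∫ x, ∫ x', a j x * a j x' * (w x x' - lam * (marg ν w x * marg ν w x')) ∂ν ∂ν := by
    intro j
    exact integral_prod _ (hF_int j)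
  -- integrability of the two pieces
  have hgg_meas : AEStronglyMeasurable (fun p : X × X => (⟪g p.1, g p.2⟫ : ℝ)) (ν.prod ν) :=
    (continuous_inner.comp_stronglyMeasurable
      ((hgmeas.comp_measurable measurable_fst).prodMk
        (hgmeas.comp_measurable measurable_snd))).aestronglyMeasurable
  have hggbd : ∀ p : X × X, ‖(⟪g p.1, g p.2⟫ : ℝ)‖ ≤ C * C := by
    intro p
    rw [Real.norm_eq_abs]
    exact (abs_real_inner_le_norm _ _).trans
      (mul_le_mul (hgC p.1) (hgC p.2) (norm_nonneg _) hC0)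
  have hint1 : Integrable (fun p : X × X => (⟪g p.1, g p.2⟫ : ℝ) * w p.1 p.2) (ν.prod ν) :=
    hwint.bdd_mul hgg_meas (Filter.Eventually.of_forall hggbd)
  have hint2 : Integrable
      (fun p : X × X => (⟪g p.1, g p.2⟫ : ℝ) * (marg ν w p.1 * marg ν w p.2)) (ν.prod ν) :=
    hmargprod_int.bdd_mul hgg_meas (Filter.Eventually.of_forall hggbd)
  -- rewrite the sum value
  have hval : ∫ p, ⟪g p.1, g p.2⟫ * m p ∂(ν.prod ν)
      = (∫ x, ∫ x', (⟪g x, g x'⟫ : ℝ) * w x x' ∂ν ∂ν)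
        - lam * ∫ x, ∫ x', (⟪g x, g x'⟫ : ℝ) * (marg ν w x * marg ν w x') ∂ν ∂ν := by
    have hsplit : ∀ p : X × X, (⟪g p.1, g p.2⟫ : ℝ) * m p
        = (⟪g p.1, g p.2⟫ : ℝ) * w p.1 p.2
          - lam * ((⟪g p.1, g p.2⟫ : ℝ) * (marg ν w p.1 * marg ν w p.2)) := by
      intro p; rw [hm]; ring
    simp_rw [hsplit]
    rw [integral_sub hint1 (hint2.const_mul lam), integral_const_mul,
      integral_prod _ hint1, integral_prod _ hint2]
  rw [← hval]
  have := key
  convert this using 2 with j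
  exact (hterm j).symm

end KCLStatement16
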